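/- arXiv:2503.16089 — 2 statements merged into one kernel-verified Lean document; each statement's English description precedes it below -/
import Mathlib

section
/- Let p in [1,∞) ∪ {∞}, and suppose 0 ∈ ℝ^d lies in the convex hull of k ≤ d+1 unit vectors v_1, ..., v_k. Then for every point z ∈ ℝ^d there exists an index j ∈ {1,...,k} such that z lies in the limit ℓp-halfspace H^p_{0, -v_j}. Equivalently, the halfspaces H^p_{0,-v_1}, ..., H^p_{0,-v_k} cover ℝ^d. -/
open scoped ENNReal

noncomputable def pnorm {d : ℕ} (p : ℝ≥0∞) [Fact (1 ≤ p)] (x : Fin d → ℝ) : ℝ :=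
  ‖(WithLp.equiv p (Fin d → ℝ)).symm x‖

def Hp {d : ℕ} (p : ℝ≥0∞) [Fact (1 ≤ p)] (x v : Fin d → ℝ) : Set (Fin d → ℝ) :=
  {z | ∀ ε : ℝ, 0 < ε → pnorm p (x - z) ≤ pnorm p (x - ε • v - z)}

section aux

variable {d : ℕ} (p : ℝ≥0∞) [Fact (1 ≤ p)]

lemma pnorm_neg (x : Fin d → ℝ) : pnorm p (-x) = pnorm p x :=
  norm_neg (E := WithLp p (Fin d → ℝ)) (WithLp.toLp p x)

lemma pnorm_add_le (x y : Fin d → ℝ) : pnorm p (x + y) ≤ pnorm p x + pnorm p y :=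
  norm_add_le (E := WithLp p (Fin d → ℝ)) (WithLp.toLp p x) (WithLp.toLp p y)

lemma pnorm_smul (c : ℝ) (x : Fin d → ℝ) : pnorm p (c • x) = |c| * pnorm p x := by
  rw [← Real.norm_eq_abs]; exact norm_smul (β := WithLp p (Fin d → ℝ)) c (WithLp.toLp p x)

lemma pnorm_sum_le {ι : Type*} (s : Finset ι) (f : ι → Fin d → ℝ) :
    pnorm p (∑ i ∈ s, f i) ≤ ∑ i ∈ s, pnorm p (f i) := by
  unfold pnorm; rw [WithLp.equiv_symm_apply, WithLp.toLp_sum]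
  exact norm_sum_le (E := WithLp p (Fin d → ℝ)) s (fun i => WithLp.toLp p (f i))

end aux

theorem halfspaces_cover_of_zero_in_convexHull {d k : ℕ} (p : ℝ≥0∞) [Fact (1 ≤ p)]
    (hk : k ≤ d + 1) (v : Fin k → Fin d → ℝ) (hunit : ∀ j, pnorm 2 (v j) = 1)
    (h0 : (0 : Fin d → ℝ) ∈ convexHull ℝ (Set.range v)) (z : Fin d → ℝ) :
    ∃ j : Fin k, z ∈ Hp p (0 : Fin d → ℝ) (-(v j)) := by
  classical
  -- extract a convex combination
  rw [mem_convexHull_iff_exists_fintype] at h0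
  obtain ⟨ι, _, w', y, hw₀', hw₁', hy, hsum'⟩ := h0
  choose g hg using fun i => Set.mem_range.mp (hy i)
  set W : Fin k → ℝ := fun j => ∑ i ∈ Finset.univ.filter (fun i => g i = j), w' i with hW
  have hW₀ : ∀ j, 0 ≤ W j := fun j => Finset.sum_nonneg fun i _ => hw₀' i
  have hW₁ : ∑ j, W j = 1 := by
    rw [hW, Finset.sum_fiberwise_of_maps_to (fun i _ => Finset.mem_univ (g i))]
    exact hw₁'
  have hWsum : ∑ j, W j • v j = 0 := by
    rw [← hsum']
    rw [← Finset.sum_fiberwise_of_maps_to (fun i _ => Finset.mem_univ (g i))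
      (fun i => w' i • y i)]
    refine Finset.sum_congr rfl fun j _ => ?_
    rw [hW, Finset.sum_smul]
    refine Finset.sum_congr rfl fun i hi => ?_
    rw [← hg i, (Finset.mem_filter.mp hi).2]
  obtain ⟨j₀, hj₀⟩ : ∃ j, 0 < W j := by
    by_contra h
    push_neg at h
    have : ∑ j, W j ≤ 0 := Finset.sum_nonpos fun j _ => h j
    linarith [hW₁]
  have hne : (Finset.univ : Finset (Fin k)).Nonempty := ⟨j₀, Finset.mem_univ _⟩
  -- negate the goal
  by_contra hcon
  push_neg at hcon
  simp only [Hp, Set.mem_setOf_eq, not_forall, not_le] at hcon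
  have hcon' : ∀ j, ∃ ε : ℝ, 0 < ε ∧ pnorm p (ε • v j - z) < pnorm p z := by
    intro j
    obtain ⟨ε, hε, hlt⟩ := hcon j
    refine ⟨ε, hε, ?_⟩
    have e1 : (0 : Fin d → ℝ) - ε • -v j - z = ε • v j - z := by
      simp [smul_neg]
    have e2 : (0 : Fin d → ℝ) - z = -z := by simp
    rw [e1, e2] at hlt
    rwa [pnorm_neg] at hlt
  choose ε hε hlt using hcon'
  set ε₀ : ℝ := Finset.univ.inf' hne ε with hε₀
  have hε₀pos : 0 < ε₀ := by
    rw [hε₀, Finset.lt_inf'_iff]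
    exact fun j _ => hε j
  have hε₀le : ∀ j, ε₀ ≤ ε j := fun j => Finset.inf'_le _ (Finset.mem_univ j)
  -- strict inequality at the common ε₀
  have hstrict : ∀ j, pnorm p (ε₀ • v j - z) < pnorm p z := by
    intro j
    set t : ℝ := ε₀ / ε j with ht
    have htpos : 0 < t := div_pos hε₀pos (hε j)
    have htle : t ≤ 1 := (div_le_one (hε j)).mpr (hε₀le j)
    have hdecomp : ε₀ • v j - z = t • (ε j • v j - z) + (1 - t) • (-z) := by
      have : t * ε j = ε₀ := div_mul_cancel₀ _ (ne_of_gt (hε j))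
      rw [smul_sub, smul_smul, this, smul_neg]
      module
    calc pnorm p (ε₀ • v j - z)
        ≤ pnorm p (t • (ε j • v j - z)) + pnorm p ((1 - t) • (-z)) := by
          rw [hdecomp]; exact pnorm_add_le p _ _
      _ = t * pnorm p (ε j • v j - z) + (1 - t) * pnorm p z := by
          rw [pnorm_smul, pnorm_smul, pnorm_neg, abs_of_pos htpos,
            abs_of_nonneg (by linarith : (0:ℝ) ≤ 1 - t)]
      _ < t * pnorm p z + (1 - t) * pnorm p z := by
          have := hlt j
          nlinarith [hlt j, htpos]
      _ = pnorm p z := by ring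
  -- derive contradiction
  have hzeq : (z : Fin d → ℝ) = ∑ j, W j • (z - ε₀ • v j) := by
    have : ∑ j, W j • (z - ε₀ • v j) = (∑ j, W j) • z - ε₀ • ∑ j, W j • v j := by
      rw [Finset.smul_sum, Finset.sum_smul, ← Finset.sum_sub_distrib]
      refine Finset.sum_congr rfl fun j _ => ?_
      rw [smul_sub, smul_smul, smul_smul, mul_comm]
    rw [this, hW₁, hWsum, one_smul, smul_zero, sub_zero]
  have hfinal : pnorm p z < pnorm p z := by
    calc pnorm p z = pnorm p (∑ j, W j • (z - ε₀ • v j)) := by rw [← hzeq]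
      _ ≤ ∑ j, pnorm p (W j • (z - ε₀ • v j)) := pnorm_sum_le p _ _
      _ = ∑ j, W j * pnorm p (ε₀ • v j - z) := by
          refine Finset.sum_congr rfl fun j _ => ?_
          rw [pnorm_smul, abs_of_nonneg (hW₀ j), ← pnorm_neg p (z - ε₀ • v j), neg_sub]
      _ < ∑ j, W j * pnorm p z := by
          refine Finset.sum_lt_sum (fun j _ => ?_) ⟨j₀, Finset.mem_univ _, ?_⟩
          · exact mul_le_mul_of_nonneg_left (le_of_lt (hstrict j)) (hW₀ j)
          · exact mul_lt_mul_of_pos_left (hstrict j₀) hj₀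
      _ = pnorm p z := by rw [← Finset.sum_mul, hW₁, one_mul]
  exact lt_irrefl _ hfinal
end

section
/- For any p ∈ [1,∞) ∪ {∞} and any x ∈ ℝ^d with ‖x‖_2 > 2d, the unit cube [0,1]^d is contained in the limit ℓp-halfspace H^p_{x,-x}. -/
open scoped ENNReal

noncomputable def pangle {d : ℕ} (a b : Fin d → ℝ) : ℝ :=
  Real.arccos ((∑ i, a i * b i) / (pnorm 2 a * pnorm 2 b))

lemma aux_add_rpow {a b q : ℝ} (ha : 0 ≤ a) (hb : 0 ≤ b) (hq : 1 ≤ q) :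
    a ^ q + b ^ q ≤ (a + b) ^ q := by
  have h := NNReal.add_rpow_le_rpow_add (⟨a, ha⟩ : NNReal) (⟨b, hb⟩ : NNReal) hq
  have h2 := NNReal.coe_le_coe.2 h
  push_cast [NNReal.coe_rpow] at h2
  exact h2

lemma aux_sum_rpow {ι : Type*} (s : Finset ι) (f : ι → ℝ) (hf : ∀ i, 0 ≤ f i)
    {q : ℝ} (hq : 1 ≤ q) : ∑ i ∈ s, f i ^ q ≤ (∑ i ∈ s, f i) ^ q := by
  induction s using Finset.cons_induction with
  | empty => simp [Real.zero_rpow (by positivity : q ≠ 0)]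
  | cons a s ha ih =>
    rw [Finset.sum_cons, Finset.sum_cons]
    calc f a ^ q + ∑ i ∈ s, f i ^ q ≤ f a ^ q + (∑ i ∈ s, f i) ^ q := by linarith
      _ ≤ (f a + ∑ i ∈ s, f i) ^ q :=
        aux_add_rpow (hf a) (Finset.sum_nonneg fun i _ => hf i) hq

lemma aux_mono {d : ℕ} (y : Fin d → ℝ) {q r : ℝ} (hq : 0 < q) (hqr : q ≤ r) :
    (∑ i, |y i| ^ r) ^ (1/r) ≤ (∑ i, |y i| ^ q) ^ (1/q) := by
  have hr : 0 < r := lt_of_lt_of_le hq hqr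
  have h1 : ∀ i : Fin d, |y i| ^ r = (|y i| ^ q) ^ (r/q) := by
    intro i
    rw [← Real.rpow_mul (abs_nonneg _)]
    congr 1
    field_simp
    try ring
  have h2 : ∑ i, (|y i| ^ q) ^ (r/q) ≤ (∑ i, |y i| ^ q) ^ (r/q) :=
    aux_sum_rpow _ _ (fun i => by positivity) ((one_le_div hq).2 hqr)
  have hsnn : (0:ℝ) ≤ ∑ i, |y i| ^ q := Finset.sum_nonneg fun i _ => by positivity
  calc (∑ i, |y i| ^ r) ^ (1/r) = (∑ i, (|y i| ^ q) ^ (r/q)) ^ (1/r) := by simp_rw [h1]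
    _ ≤ ((∑ i, |y i| ^ q) ^ (r/q)) ^ (1/r) :=
        Real.rpow_le_rpow (Finset.sum_nonneg fun i _ => by positivity) h2 (by positivity)
    _ = (∑ i, |y i| ^ q) ^ (1/q) := by
        rw [← Real.rpow_mul hsnn]
        congr 1
        field_simp
        try ring

lemma pnorm_eq_sum {d : ℕ} {p : ℝ≥0∞} [Fact (1 ≤ p)] (hp : p ≠ ∞) (y : Fin d → ℝ) :
    pnorm p y = (∑ i, |y i| ^ p.toReal) ^ (1 / p.toReal) := by
  have h1 : (1:ℝ≥0∞) ≤ p := Fact.out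
  have hq : 0 < p.toReal := by
    have := ENNReal.toReal_mono hp h1
    simp at this; linarith
  rw [pnorm, PiLp.norm_eq_sum hq]
  simp [Real.norm_eq_abs]

lemma pnorm_two_eq {d : ℕ} (y : Fin d → ℝ) :
    pnorm 2 y = (∑ i, |y i| ^ (2:ℝ)) ^ (1/(2:ℝ)) := by
  rw [pnorm_eq_sum (by norm_num)]
  norm_num

lemma pnorm_top_eq {d : ℕ} (y : Fin d → ℝ) :
    pnorm ∞ y = ⨆ i, |y i| := by
  rw [pnorm, PiLp.norm_eq_ciSup]
  simp [Real.norm_eq_abs]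

lemma key_ineq {d : ℕ} (p : ℝ≥0∞) [Fact (1 ≤ p)] (x z : Fin d → ℝ)
    (hz : z ∈ Set.Icc (0 : Fin d → ℝ) 1) (hx : 2 * d < pnorm 2 x) :
    2 * pnorm p z ≤ pnorm p x := by
  -- d ≥ 1
  rcases Nat.eq_zero_or_pos d with hd | hd
  · subst hd
    exfalso
    have : x = 0 := Subsingleton.elim _ _
    rw [this, pnorm_two_eq] at hx
    simp at hx
  have hd1 : (1:ℝ) ≤ d := by exact_mod_cast hd
  have hzabs : ∀ i, |z i| ≤ 1 := by
    intro i
    rw [abs_of_nonneg (hz.1 i)]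
    exact hz.2 i
  -- x bound via sup
  have hxsum : 2 * d < (∑ i, |x i| ^ (2:ℝ)) ^ (1/(2:ℝ)) := by
    rw [← pnorm_two_eq]; exact hx
  have hs : (0:ℝ) < (d:ℝ) ^ ((1:ℝ)/2) := by positivity
  have hs1 : (1:ℝ) ≤ (d:ℝ) ^ ((1:ℝ)/2) := Real.one_le_rpow hd1 (by norm_num)
  -- generic: if every |x i| ≤ B with B ≥ 0 then pnorm 2 x ≤ √d * B
  have sup_bound : ∀ B : ℝ, 0 ≤ B → (∀ i, |x i| ≤ B) →
      pnorm 2 x ≤ (d:ℝ) ^ ((1:ℝ)/2) * B := by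
    intro B hB hiB
    rw [pnorm_two_eq]
    have h1 : ∑ i, |x i| ^ (2:ℝ) ≤ (d:ℝ) * B ^ (2:ℝ) := by
      calc ∑ i, |x i| ^ (2:ℝ) ≤ ∑ _i : Fin d, B ^ (2:ℝ) :=
            Finset.sum_le_sum fun i _ => Real.rpow_le_rpow (abs_nonneg _) (hiB i) (by norm_num)
        _ = (d:ℝ) * B ^ (2:ℝ) := by simp [mul_comm]
    calc (∑ i, |x i| ^ (2:ℝ)) ^ (1/(2:ℝ)) ≤ ((d:ℝ) * B ^ (2:ℝ)) ^ (1/(2:ℝ)) :=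
          Real.rpow_le_rpow (Finset.sum_nonneg fun i _ => by positivity) h1 (by norm_num)
      _ = (d:ℝ) ^ ((1:ℝ)/2) * B := by
          rw [Real.mul_rpow (by positivity) (by positivity), ← Real.rpow_mul hB]
          norm_num
  by_cases hptop : p = ∞
  · subst hptop
    have hne : Nonempty (Fin d) := ⟨⟨0, hd⟩⟩
    have hzb : pnorm ∞ z ≤ 1 := by
      rw [pnorm_top_eq]
      exact ciSup_le fun i => hzabs i
    have hxb : ∀ i, |x i| ≤ pnorm ∞ x := by
      intro i
      rw [pnorm_top_eq]
      exact le_ciSup (f := fun j => |x j|) (Set.Finite.bddAbove (Set.finite_range _)) i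
    have hBnn : 0 ≤ pnorm ∞ x := le_trans (abs_nonneg _) (hxb ⟨0, hd⟩)
    have hsb := sup_bound _ hBnn hxb
    have hdd : (d:ℝ) ^ ((1:ℝ)/2) * (d:ℝ) ^ ((1:ℝ)/2) = (d:ℝ) := by
      rw [← Real.rpow_add (by positivity)]
      norm_num
    have hB2s : 2 * ((d:ℝ) ^ ((1:ℝ)/2)) < pnorm ∞ x := by
      nlinarith [hx, hsb, hdd, hs]
    linarith [hB2s, hzb, hs1]
  · -- finite p
    have h1 : (1:ℝ≥0∞) ≤ p := Fact.out
    have hq1 : 1 ≤ p.toReal := by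
      have := ENNReal.toReal_mono hptop h1
      simpa using this
    have hq0 : 0 < p.toReal := by linarith
    set q := p.toReal with hqdef
    rcases le_total q 2 with hq2 | hq2
    · -- q ≤ 2 : pnorm 2 x ≤ pnorm p x, pnorm p z ≤ d
      have hmono : pnorm 2 x ≤ pnorm p x := by
        rw [pnorm_two_eq, pnorm_eq_sum hptop]
        exact aux_mono x hq0 hq2
      have hzb : pnorm p z ≤ d := by
        rw [pnorm_eq_sum hptop]
        have h1' : ∑ i, |z i| ^ q ≤ (d:ℝ) := by
          calc ∑ i, |z i| ^ q ≤ ∑ _i : Fin d, (1:ℝ) :=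
                Finset.sum_le_sum fun i _ =>
                  Real.rpow_le_one (abs_nonneg _) (hzabs i) (le_of_lt hq0)
            _ = (d:ℝ) := by simp
        calc (∑ i, |z i| ^ q) ^ (1/q) ≤ (d:ℝ) ^ (1/q) :=
              Real.rpow_le_rpow (Finset.sum_nonneg fun i _ => by positivity) h1' (by positivity)
          _ ≤ (d:ℝ) ^ (1:ℝ) := Real.rpow_le_rpow_of_exponent_le hd1 (by
                rw [div_le_one hq0]; linarith)
          _ = (d:ℝ) := by norm_num
      linarith
    · -- 2 ≤ q
      have hzb : pnorm p z ≤ (d:ℝ) ^ ((1:ℝ)/2) := by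
        have hm : pnorm p z ≤ pnorm 2 z := by
          rw [pnorm_two_eq, pnorm_eq_sum hptop]
          exact aux_mono z (by norm_num) hq2
        have h2 : pnorm 2 z ≤ (d:ℝ) ^ ((1:ℝ)/2) := by
          rw [pnorm_two_eq]
          calc (∑ i, |z i| ^ (2:ℝ)) ^ (1/(2:ℝ)) ≤ (d:ℝ) ^ (1/(2:ℝ)) := by
                apply Real.rpow_le_rpow (Finset.sum_nonneg fun i _ => by positivity) _ (by norm_num)
                calc ∑ i, |z i| ^ (2:ℝ) ≤ ∑ _i : Fin d, (1:ℝ) :=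
                      Finset.sum_le_sum fun i _ =>
                        Real.rpow_le_one (abs_nonneg _) (hzabs i) (by norm_num)
                  _ = (d:ℝ) := by simp
            _ = (d:ℝ) ^ ((1:ℝ)/2) := by norm_num
        linarith
      have hxb : ∀ i, |x i| ≤ pnorm p x := by
        intro i
        rw [pnorm_eq_sum hptop]
        have h1' : |x i| ^ q ≤ ∑ j, |x j| ^ q :=
          Finset.single_le_sum (f := fun j => |x j| ^ q) (fun j _ => by positivity)
            (Finset.mem_univ i)
        calc |x i| = (|x i| ^ q) ^ (1/q) := by
              rw [← Real.rpow_mul (abs_nonneg _)]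
              rw [mul_one_div, div_self (ne_of_gt hq0), Real.rpow_one]
          _ ≤ (∑ j, |x j| ^ q) ^ (1/q) :=
              Real.rpow_le_rpow (by positivity) h1' (by positivity)
      have hBnn : 0 ≤ pnorm p x := le_trans (abs_nonneg _) (hxb ⟨0, hd⟩)
      have hsb := sup_bound _ hBnn hxb
      have hdd : (d:ℝ) ^ ((1:ℝ)/2) * (d:ℝ) ^ ((1:ℝ)/2) = (d:ℝ) := by
        rw [← Real.rpow_add (by positivity)]
        norm_num
      nlinarith [hx, hs, hzb, hsb]

theorem cube_in_far_halfspace {d : ℕ} (p : ℝ≥0∞) [Fact (1 ≤ p)]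
    (x : Fin d → ℝ) (hx : 2 * d < pnorm 2 x) :
    Set.Icc (0 : Fin d → ℝ) 1 ⊆ Hp p x (-x) := by
  intro z hz ε hε
  have hkey : 2 * pnorm p z ≤ pnorm p x := key_ineq p x z hz hx
  have hrw : x - ε • (-x) - z = (1 + ε) • x - z := by
    rw [smul_neg, sub_neg_eq_add, add_smul, one_smul]
  rw [hrw]
  set E := WithLp.equiv p (Fin d → ℝ)
  set X := E.symm x with hX
  set Z := E.symm z with hZ
  have h1e : (0:ℝ) < 1 + ε := by linarith
  have hA : pnorm p ((1 + ε) • x - z) = ‖(1 + ε) • X - Z‖ := by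
    rw [pnorm, WithLp.equiv_symm_apply, WithLp.toLp_sub, WithLp.toLp_smul]; rfl
  have hXZ : pnorm p (x - z) = ‖X - Z‖ := by
    rw [pnorm, WithLp.equiv_symm_apply, WithLp.toLp_sub]; rfl
  rw [hA, hXZ]
  set A := ‖(1 + ε) • X - Z‖ with hAdef
  have hnX : pnorm p x = ‖X‖ := rfl
  have hnZ : pnorm p z = ‖Z‖ := rfl
  rw [hnX, hnZ] at hkey
  have hZA : ‖Z‖ ≤ A := by
    have h1 : ‖(1 + ε) • X‖ - ‖Z‖ ≤ A := norm_sub_norm_le _ _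
    have h2 : ‖(1 + ε) • X‖ = (1 + ε) * ‖X‖ := by
      rw [norm_smul, Real.norm_eq_abs, abs_of_pos h1e]
    nlinarith [norm_nonneg X, norm_nonneg Z]
  have hdecomp : X - Z = (1/(1+ε)) • ((1 + ε) • X - Z) + (ε/(1+ε)) • (-Z) := by
    match_scalars <;> (field_simp; try ring)
  calc ‖X - Z‖ ≤ ‖(1/(1+ε)) • ((1 + ε) • X - Z)‖ + ‖(ε/(1+ε)) • (-Z)‖ := by
        rw [hdecomp]; exact norm_add_le _ _
    _ = (1/(1+ε)) * A + (ε/(1+ε)) * ‖Z‖ := by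
        rw [norm_smul, norm_smul, norm_neg, Real.norm_eq_abs, Real.norm_eq_abs,
          abs_of_pos (by positivity), abs_of_pos (by positivity)]
    _ ≤ (1/(1+ε)) * A + (ε/(1+ε)) * A := by
        gcongr
    _ = A := by field_simp
end
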